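/- Let H be a connected simple graph with minimum degree at least 2 satisfying γ_dR(H) ≤ 12·n(H)/11, and let u ∈ V(H). If G is the graph obtained from the disjoint union of H and a cycle C_m = x_1x_2⋯x_mx_1 with m ∉ {5, 7}, by adding the edge u x_1, then γ_dR(G) ≤ 12·n(G)/11. -/
import Mathlib


/-- A double Roman dominating function on a simple graph `G`:
values in `{0,1,2,3}`, every vertex with value `0` has two neighbors with value `2`
or one neighbor with value `3`, and every vertex with value `1` has a neighbor with
value at least `2`. -/
def IsDRDF {V : Type*} (G : SimpleGraph V) (f : V → ℕ) : Prop :=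
  (∀ v, f v ≤ 3) ∧
  (∀ v, f v = 0 →
    (∃ u w, u ≠ w ∧ G.Adj v u ∧ G.Adj v w ∧ f u = 2 ∧ f w = 2) ∨ ∃ u, G.Adj v u ∧ f u = 3) ∧
  (∀ v, f v = 1 → ∃ u, G.Adj v u ∧ 2 ≤ f u)

/-- The double Roman domination number: the minimum weight of a DRDF. -/
noncomputable def gammaDR {V : Type*} [Fintype V] (G : SimpleGraph V) : ℕ :=
  sInf {w | ∃ f, IsDRDF G f ∧ ∑ v, f v = w}

/-- Base relation for the graph obtained from the disjoint union of `H` and the cycle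
`C_m = x_1 x_2 ⋯ x_m x_1` (on `Fin m`, with `x_1` being `0`) by adding the edge
`u x_1`. -/
def joinCycleR {V : Type*} (H : SimpleGraph V) (u : V) (m : ℕ) :
    (V ⊕ Fin m) → (V ⊕ Fin m) → Prop
  | .inl a, .inl b => H.Adj a b
  | .inr a, .inr b => (a.val + 1) % m = b.val
  | .inl a, .inr x => a = u ∧ x.val = 0
  | .inr _, .inl _ => False

/-- The graph obtained from the disjoint union of `H` and the cycle `C_m` by adding
the edge `u x_1`. -/
def joinCycle {V : Type*} (H : SimpleGraph V) (u : V) (m : ℕ) :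
    SimpleGraph (V ⊕ Fin m) :=
  SimpleGraph.fromRel (joinCycleR H u m)

/-- If `H` is a connected graph with minimum degree at least `2` satisfying
`γ_dR(H) ≤ 12 n(H) / 11`, `u ∈ V(H)`, and `G` is obtained from the disjoint union of
`H` and a cycle `C_m` with `m ∉ {5,7}` by adding the edge `u x_1`, then
`γ_dR(G) ≤ 12 n(G) / 11`. -/
private lemma s2 (k : ℕ) :
    (∑ i ∈ Finset.range (2*k), (if i % 2 = 0 then (2:ℕ) else 0)) = 2*k := by
  induction k with
  | zero => simp
  | succ k ih =>
    have h1 : 2*(k+1) = (2*k+1)+1 := by ring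
    rw [h1, Finset.sum_range_succ, Finset.sum_range_succ, ih]
    split_ifs <;> omega

private lemma s3 (k : ℕ) :
    (∑ i ∈ Finset.range (3*k), (if i % 3 = 1 then (3:ℕ) else 0)) = 3*k := by
  induction k with
  | zero => simp
  | succ k ih =>
    have h1 : 3*(k+1) = ((3*k+1)+1)+1 := by ring
    rw [h1, Finset.sum_range_succ, Finset.sum_range_succ, Finset.sum_range_succ, ih]
    split_ifs <;> omega

private lemma cycle_g (m : ℕ) (hm : 3 ≤ m) (hm5 : m ≠ 5) (hm7 : m ≠ 7) :
    ∃ g : Fin m → ℕ,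
      (∀ i, g i ≤ 3) ∧
      (∀ i : Fin m, g i = 0 →
        (∃ a b : Fin m, a ≠ b ∧
          ((i.val + 1) % m = a.val ∨ (a.val + 1) % m = i.val) ∧
          ((i.val + 1) % m = b.val ∨ (b.val + 1) % m = i.val) ∧
          g a = 2 ∧ g b = 2) ∨
        (∃ a : Fin m, ((i.val + 1) % m = a.val ∨ (a.val + 1) % m = i.val) ∧ g a = 3)) ∧
      (∀ i, g i ≠ 1) ∧
      11 * ∑ i, g i ≤ 12 * m := by
  rcases Nat.even_or_odd m with he | ho
  · -- even case
    have hm2 : m % 2 = 0 := Nat.even_iff.mp he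
    have hm4 : 4 ≤ m := by omega
    refine ⟨fun i => if i.val % 2 = 0 then 2 else 0, ?_, ?_, ?_, ?_⟩
    · intro i
      show (if i.val % 2 = 0 then (2:ℕ) else 0) ≤ 3
      split_ifs <;> omega
    · intro i h0
      have h0' : (if i.val % 2 = 0 then (2:ℕ) else 0) = 0 := h0
      have hi : i.val % 2 = 1 := by split_ifs at h0' <;> omega
      have hilt : i.val < m := i.isLt
      have hb : (i.val + 1) % m = if i.val + 1 = m then 0 else i.val + 1 := by
        split_ifs with h
        · simp [h]
        · exact Nat.mod_eq_of_lt (by omega)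
      left
      refine ⟨⟨i.val - 1, by omega⟩, ⟨(i.val + 1) % m, Nat.mod_lt _ (by omega)⟩,
        ?_, Or.inr ?_, Or.inl rfl, ?_, ?_⟩
      · have : (i.val - 1 : ℕ) ≠ (i.val + 1) % m := by rw [hb]; split_ifs <;> omega
        exact fun h => this (congrArg Fin.val h)
      · show (i.val - 1 + 1) % m = i.val
        have h1 : i.val - 1 + 1 = i.val := by omega
        rw [h1, Nat.mod_eq_of_lt hilt]
      · show (if (i.val - 1) % 2 = 0 then (2:ℕ) else 0) = 2
        rw [if_pos (by omega)]
      · show (if ((i.val + 1) % m) % 2 = 0 then (2:ℕ) else 0) = 2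
        rw [hb]; split_ifs <;> omega
    · intro i
      show (if i.val % 2 = 0 then (2:ℕ) else 0) ≠ 1
      split_ifs <;> omega
    · have hs : ∑ i : Fin m, (if (i : ℕ) % 2 = 0 then (2:ℕ) else 0)
          = ∑ i ∈ Finset.range m, (if i % 2 = 0 then (2:ℕ) else 0) :=
        Fin.sum_univ_eq_sum_range (fun i => if i % 2 = 0 then (2:ℕ) else 0) m
      rw [hs, show m = 2 * (m / 2) by omega, s2]
      omega
  · -- odd case
    have hm2 : m % 2 = 1 := Nat.odd_iff.mp ho
    refine ⟨fun i => if i.val % 3 = 1 then 3 else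
        (if m % 3 = 1 ∧ i.val = m - 1 then 2 else 0), ?_, ?_, ?_, ?_⟩
    · intro i
      show (if i.val % 3 = 1 then (3:ℕ) else (if m % 3 = 1 ∧ i.val = m - 1 then 2 else 0)) ≤ 3
      split_ifs <;> omega
    · intro i h0
      have h0' : (if i.val % 3 = 1 then (3:ℕ) else
          (if m % 3 = 1 ∧ i.val = m - 1 then 2 else 0)) = 0 := h0
      have hi1 : i.val % 3 ≠ 1 := by intro h; rw [if_pos h] at h0'; omega
      have hi2 : ¬ (m % 3 = 1 ∧ i.val = m - 1) := by
        intro h; rw [if_neg hi1, if_pos h] at h0'; omega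
      have hilt : i.val < m := i.isLt
      right
      rcases (show i.val % 3 = 0 ∨ i.val % 3 = 2 by omega) with h | h
      · have hlt : i.val + 1 < m := by omega
        refine ⟨⟨i.val + 1, hlt⟩, Or.inl (Nat.mod_eq_of_lt hlt), ?_⟩
        show (if (i.val + 1) % 3 = 1 then (3:ℕ) else _) = 3
        rw [if_pos (by omega)]
      · refine ⟨⟨i.val - 1, by omega⟩, Or.inr ?_, ?_⟩
        · show (i.val - 1 + 1) % m = i.val
          have h1 : i.val - 1 + 1 = i.val := by omega
          rw [h1, Nat.mod_eq_of_lt hilt]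
        · show (if (i.val - 1) % 3 = 1 then (3:ℕ) else _) = 3
          rw [if_pos (by omega)]
    · intro i
      show (if i.val % 3 = 1 then (3:ℕ) else (if m % 3 = 1 ∧ i.val = m - 1 then 2 else 0)) ≠ 1
      split_ifs <;> omega
    · have hs : ∑ i : Fin m, (if (i:ℕ) % 3 = 1 then (3:ℕ) else
          (if m % 3 = 1 ∧ (i:ℕ) = m - 1 then 2 else 0))
          = ∑ i ∈ Finset.range m, (if i % 3 = 1 then (3:ℕ) else
          (if m % 3 = 1 ∧ i = m - 1 then 2 else 0)) :=
        Fin.sum_univ_eq_sum_range (fun i => if i % 3 = 1 then (3:ℕ) else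
          (if m % 3 = 1 ∧ i = m - 1 then 2 else 0)) m
      rw [hs]
      rcases (show m % 3 = 0 ∨ m % 3 = 1 ∨ m % 3 = 2 by omega) with h3 | h3 | h3
      · have hc : ∑ i ∈ Finset.range m, (if i % 3 = 1 then (3:ℕ) else
            (if m % 3 = 1 ∧ i = m - 1 then 2 else 0))
            = ∑ i ∈ Finset.range m, (if i % 3 = 1 then (3:ℕ) else 0) :=
          Finset.sum_congr rfl (fun j _ => by split_ifs <;> omega)
        rw [hc, show m = 3 * (m / 3) by omega, s3]
        omega
      · set k := m / 3 with hk
        have hm' : m = 3 * k + 1 := by omega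
        have key : ∑ i ∈ Finset.range m, (if i % 3 = 1 then (3:ℕ) else
            (if m % 3 = 1 ∧ i = m - 1 then 2 else 0)) = m + 1 := by
          rw [show (Finset.range m) = Finset.range (3*k+1) by rw [← hm']]
          rw [Finset.sum_range_succ]
          have hc : ∑ i ∈ Finset.range (3*k), (if i % 3 = 1 then (3:ℕ) else
              (if m % 3 = 1 ∧ i = m - 1 then 2 else 0))
              = ∑ i ∈ Finset.range (3*k), (if i % 3 = 1 then (3:ℕ) else 0) :=
            Finset.sum_congr rfl (fun j hj => by
              rw [Finset.mem_range] at hj; split_ifs <;> omega)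
          rw [hc, s3]
          split_ifs <;> omega
        rw [key]
        omega
      · set k := m / 3 with hk
        have hm' : m = 3 * k + 2 := by omega
        have key : ∑ i ∈ Finset.range m, (if i % 3 = 1 then (3:ℕ) else
            (if m % 3 = 1 ∧ i = m - 1 then 2 else 0)) = m + 1 := by
          rw [show (Finset.range m) = Finset.range ((3*k+1)+1) by rw [← hm']]
          rw [Finset.sum_range_succ, Finset.sum_range_succ]
          have hc : ∑ i ∈ Finset.range (3*k), (if i % 3 = 1 then (3:ℕ) else
              (if m % 3 = 1 ∧ i = m - 1 then 2 else 0))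
              = ∑ i ∈ Finset.range (3*k), (if i % 3 = 1 then (3:ℕ) else 0) :=
            Finset.sum_congr rfl (fun j hj => by
              rw [Finset.mem_range] at hj; split_ifs <;> omega)
          rw [hc, s3]
          split_ifs <;> omega
        rw [key]
        omega

private lemma adj_inl {V : Type*} (H : SimpleGraph V) (u : V) (m : ℕ) {a b : V}
    (h : H.Adj a b) : (joinCycle H u m).Adj (Sum.inl a) (Sum.inl b) := by
  rw [joinCycle, SimpleGraph.fromRel_adj]
  exact ⟨by simp [h.ne], Or.inl h⟩

private lemma adj_inr {V : Type*} (H : SimpleGraph V) (u : V) (m : ℕ) {i j : Fin m}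
    (hne : i ≠ j) (h : (i.val + 1) % m = j.val ∨ (j.val + 1) % m = i.val) :
    (joinCycle H u m).Adj (Sum.inr i) (Sum.inr j) := by
  rw [joinCycle, SimpleGraph.fromRel_adj]
  refine ⟨by simpa using hne, ?_⟩
  rcases h with h | h
  · exact Or.inl h
  · exact Or.inr h

theorem gammaDR_joinCycle_le {V : Type*} [Fintype V] (H : SimpleGraph V)
    (hconn : H.Connected) (hdeg : ∀ v, 2 ≤ {w | H.Adj v w}.ncard)
    (hH : (gammaDR H : ℚ) ≤ 12 * (Fintype.card V) / 11)
    (u : V) (m : ℕ) (hm : 3 ≤ m) (hm5 : m ≠ 5) (hm7 : m ≠ 7) :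
    (gammaDR (joinCycle H u m) : ℚ) ≤ 12 * (Fintype.card (V ⊕ Fin m)) / 11 := by
    classical
  obtain ⟨g, hg3, hg0, hg1, hgsum⟩ := cycle_g m hm hm5 hm7
  have hne : {w | ∃ f, IsDRDF H f ∧ ∑ v, f v = w}.Nonempty :=
    ⟨∑ _v : V, 3, fun _ => 3, ⟨fun _ => le_rfl, fun v h => by simp at h,
      fun v h => by simp at h⟩, rfl⟩
  obtain ⟨f, hf, hfw⟩ := Nat.sInf_mem hne
  have hfw' : ∑ v, f v = gammaDR H := hfw
  set F : V ⊕ Fin m → ℕ := Sum.elim f g with hFdef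
  have hF : IsDRDF (joinCycle H u m) F := by
    refine ⟨?_, ?_, ?_⟩
    · rintro (v | i)
      · exact hf.1 v
      · exact hg3 i
    · rintro (v | i) h0
      · rcases hf.2.1 v h0 with ⟨a, b, hab, ha, hb, ha2, hb2⟩ | ⟨a, ha, ha3⟩
        · exact Or.inl ⟨Sum.inl a, Sum.inl b, by simpa using hab,
            adj_inl H u m ha, adj_inl H u m hb, ha2, hb2⟩
        · exact Or.inr ⟨Sum.inl a, adj_inl H u m ha, ha3⟩
      · have h0' : g i = 0 := h0
        rcases hg0 i h0' with ⟨a, b, hab, ha, hb, ha2, hb2⟩ | ⟨a, ha, ha3⟩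
        · have hia : i ≠ a := by rintro rfl; exact absurd (h0' ▸ ha2) (by norm_num)
          have hib : i ≠ b := by rintro rfl; exact absurd (h0' ▸ hb2) (by norm_num)
          exact Or.inl ⟨Sum.inr a, Sum.inr b, by simpa using hab,
            adj_inr H u m hia ha, adj_inr H u m hib hb, ha2, hb2⟩
        · have hia : i ≠ a := by rintro rfl; exact absurd (h0' ▸ ha3) (by norm_num)
          exact Or.inr ⟨Sum.inr a, adj_inr H u m hia ha, ha3⟩
    · rintro (v | i) h1
      · rcases hf.2.2 v h1 with ⟨a, ha, ha2⟩
        exact ⟨Sum.inl a, adj_inl H u m ha, ha2⟩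
      · exact absurd h1 (hg1 i)
  have hmem : (∑ x, F x) ∈ {w | ∃ f, IsDRDF (joinCycle H u m) f ∧ ∑ v, f v = w} :=
    ⟨F, hF, rfl⟩
  have hle : gammaDR (joinCycle H u m) ≤ ∑ x, F x := Nat.sInf_le hmem
  have hsplit : ∑ x, F x = (∑ v, f v) + ∑ i, g i := by
    rw [hFdef, Fintype.sum_sum_type]
    simp
  have h1 : ((∑ v, f v : ℕ) : ℚ) ≤ 12 * (Fintype.card V) / 11 := by
    rw [hfw']; exact hH
  have h2 : ((∑ i, g i : ℕ) : ℚ) ≤ 12 * m / 11 := by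
    rw [le_div_iff₀ (by norm_num : (0:ℚ) < 11)]
    have : ((11 * ∑ i, g i : ℕ) : ℚ) ≤ ((12 * m : ℕ) : ℚ) := by exact_mod_cast hgsum
    push_cast at this ⊢
    linarith
  have hfin : (gammaDR (joinCycle H u m) : ℚ) ≤ (∑ v, f v : ℕ) + (∑ i, g i : ℕ) := by
    have := hsplit ▸ hle
    exact_mod_cast this
  have hcard : ((Fintype.card (V ⊕ Fin m)) : ℚ) = (Fintype.card V : ℚ) + m := by
    simp [Fintype.card_sum]
  rw [hcard]
  have hsplit2 : 12 * ((Fintype.card V : ℚ) + m) / 11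
      = 12 * (Fintype.card V) / 11 + 12 * m / 11 := by ring
  rw [hsplit2]
  linarith
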